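/- arXiv:1210.5902 — 3 statements merged into one kernel-verified Lean document; each statement's English description precedes it below -/
import Mathlib

section
/- The measure I_min violates left monotonicity: for the joint distribution on (X₁,X₂,S,S') assigning probability 1/6 to each of (0,0,0,0), (0,1,0,0), (0,1,0,1), (1,1,0,1) and probability 2/6 to (1,0,1,1), one has I_min(S:X₁;X₂) = 1/3 + (2/3)((3/4)log₂3 − 1) and I_min((S,S'):X₁;X₂) = 1/3, hence I_min(S:X₁;X₂) > I_min((S,S'):X₁;X₂). -/
open scoped Classical
open Finset

/-- Probability that random variable `X` takes value `x` under `p`. -/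
noncomputable def pr {Ω α : Type*} [Fintype Ω] [DecidableEq α]
    (p : Ω → ℝ) (X : Ω → α) (x : α) : ℝ :=
  ∑ ω, if X ω = x then p ω else 0

/-- Shannon mutual information (base 2). -/
noncomputable def mi {Ω α β : Type*} [Fintype Ω] [Fintype α] [Fintype β]
    [DecidableEq α] [DecidableEq β]
    (p : Ω → ℝ) (X : Ω → α) (Y : Ω → β) : ℝ :=
  ∑ x, ∑ y,
    pr p (fun ω => (X ω, Y ω)) (x, y) *
      Real.logb 2 (pr p (fun ω => (X ω, Y ω)) (x, y) / (pr p X x * pr p Y y))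

/-- The inner term of `I_min`: `∑_a p(a|s) log₂ (p(s|a)/p(s))`. -/
noncomputable def iminTerm {Ω σ α : Type*} [Fintype Ω] [Fintype σ] [Fintype α]
    [DecidableEq σ] [DecidableEq α]
    (p : Ω → ℝ) (S : Ω → σ) (A : Ω → α) (s : σ) : ℝ :=
  ∑ a, (pr p (fun ω => (S ω, A ω)) (s, a) / pr p S s) *
      Real.logb 2 ((pr p (fun ω => (S ω, A ω)) (s, a) / pr p A a) / pr p S s)

/-- `I_min` for two predictor variables. -/
noncomputable def imin2 {Ω σ α β : Type*} [Fintype Ω] [Fintype σ] [Fintype α] [Fintype β]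
    [DecidableEq σ] [DecidableEq α] [DecidableEq β]
    (p : Ω → ℝ) (T : Ω → σ) (A : Ω → α) (B : Ω → β) : ℝ :=
  ∑ s, pr p T s * min (iminTerm p T A s) (iminTerm p T B s)

/-- `I_min` violates left monotonicity: for the given five-point distribution,
`I_min(S:X₁;X₂) = 1/3 + (2/3)((3/4)log₂3 − 1) > 1/3 = I_min((S,S'):X₁;X₂)`. -/
theorem imin_violates_left_monotonicity
    (p : Fin 5 → ℝ) (hp : p = ![1/6, 1/6, 1/6, 1/6, 2/6])
    (X₁ X₂ S S' : Fin 5 → Bool)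
    (hX₁ : X₁ = ![false, false, false, true, true])
    (hX₂ : X₂ = ![false, true, true, true, false])
    (hS : S = ![false, false, false, false, true])
    (hS' : S' = ![false, false, true, true, true]) :
    imin2 p S X₁ X₂ = 1/3 + (2/3) * ((3/4) * Real.logb 2 3 - 1) ∧
    imin2 p (fun ω => (S ω, S' ω)) X₁ X₂ = 1/3 ∧
    imin2 p (fun ω => (S ω, S' ω)) X₁ X₂ < imin2 p S X₁ X₂ := by
  
  subst hp hX₁ hX₂ hS hS'
  have h1 : Real.logb 2 (1/2 : ℝ) = -1 := by
    rw [show (1:ℝ)/2 = 2⁻¹ by norm_num, Real.logb_inv, Real.logb_self_eq_one] <;> norm_num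
  have h2 : Real.logb 2 (3/2 : ℝ) = Real.logb 2 3 - 1 := by
    rw [Real.logb_div (by norm_num) (by norm_num), Real.logb_self_eq_one] <;> norm_num
  have hA : imin2 ![1/6, 1/6, 1/6, 1/6, 2/6]
      ![false, false, false, false, true]
      ![false, false, false, true, true] ![false, true, true, true, false]
      = 1/3 + (2/3) * ((3/4) * Real.logb 2 3 - 1) := by
    simp only [imin2, iminTerm, pr, Fin.sum_univ_five, Fintype.sum_bool, Fintype.sum_prod_type, Matrix.cons_val]
    norm_num
    rw [h1, h2, add_comm, min_self]; ring
  have hB : imin2 ![1/6, 1/6, 1/6, 1/6, 2/6]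
      (fun ω => ((![false, false, false, false, true] : Fin 5 → Bool) ω,
        (![false, false, true, true, true] : Fin 5 → Bool) ω))
      ![false, false, false, true, true] ![false, true, true, true, false] = 1/3 := by
    simp only [imin2, iminTerm, pr, Fin.sum_univ_five, Fintype.sum_bool, Fintype.sum_prod_type, Matrix.cons_val]
    norm_num
  refine ⟨hA, hB, ?_⟩
  rw [hA, hB]
  have hlog : (4:ℝ)/3 < Real.logb 2 3 := by
    have h16 : Real.log (16:ℝ) = 4 * Real.log 2 := by
      rw [show (16:ℝ) = 2^4 by norm_num, Real.log_pow]; push_cast; ring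
    have h27 : Real.log (27:ℝ) = 3 * Real.log 3 := by
      rw [show (27:ℝ) = 3^3 by norm_num, Real.log_pow]; push_cast; ring
    have hlt : Real.log (16:ℝ) < Real.log 27 := Real.log_lt_log (by norm_num) (by norm_num)
    have h2pos : (0:ℝ) < Real.log 2 := Real.log_pos (by norm_num)
    rw [Real.logb, div_lt_div_iff₀ (by norm_num) h2pos] at *
    nlinarith
  nlinarith
end

section
/- If SI(S:X₁;X₂) is any measure of shared information such that the induced synergy CI(S:X₁;X₂) := I(S:X₁|X₂) − I(S:X₁) + SI(S:X₁;X₂) is nonnegative, and SI satisfies SI(S:X₁;X₂) ≤ I(S:X₁), then whenever S is a deterministic function of X₂ one has SI(S:X₁;X₂) = I(S:X₁). -/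
open scoped Classical
open Finset

/-- The conditional distribution of `p` given `Z = z`. -/
noncomputable def condDist {Ω γ : Type*} [Fintype Ω] [DecidableEq γ]
    (p : Ω → ℝ) (Z : Ω → γ) (z : γ) : Ω → ℝ :=
  fun ω => if Z ω = z then p ω / pr p Z z else 0

/-- Conditional mutual information `I(X : Y | Z)` (base 2). -/
noncomputable def cmi {Ω α β γ : Type*} [Fintype Ω] [Fintype α] [Fintype β] [Fintype γ]
    [DecidableEq α] [DecidableEq β] [DecidableEq γ]
    (p : Ω → ℝ) (X : Ω → α) (Y : Ω → β) (Z : Ω → γ) : ℝ :=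
  ∑ z, pr p Z z * mi (condDist p Z z) X Y

lemma mi_const_fst {Ω σ α : Type*} [Fintype Ω] [Fintype σ] [Fintype α]
    [DecidableEq σ] [DecidableEq α]
    (q : Ω → ℝ) (hq0 : ∀ ω, 0 ≤ q ω) (hq1 : ∑ ω, q ω = 1)
    (S : Ω → σ) (X₁ : Ω → α) (c : σ) (hc : ∀ ω, q ω ≠ 0 → S ω = c) :
    mi q S X₁ = 0 := by
  have hq0' : ∀ ω, S ω ≠ c → q ω = 0 := fun ω h => by
    by_contra hne; exact h (hc ω hne)
  unfold mi
  apply Finset.sum_eq_zero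
  intro s _
  apply Finset.sum_eq_zero
  intro x _
  by_cases hs : s = c
  · subst hs
    have hpair : pr q (fun ω => (S ω, X₁ ω)) (s, x) = pr q X₁ x := by
      unfold pr
      apply Finset.sum_congr rfl
      intro ω _
      by_cases hx : X₁ ω = x
      · by_cases hS : S ω = s
        · simp [hx, hS]
        · simp [hx, hS, hq0' ω hS]
      · simp [hx]
    have hS : pr q S s = 1 := by
      unfold pr
      rw [← hq1]
      apply Finset.sum_congr rfl
      intro ω _
      by_cases hS : S ω = s
      · simp [hS]
      · simp [hS, hq0' ω hS]
    rw [hpair, hS, one_mul]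
    by_cases hx0 : pr q X₁ x = 0
    · simp [hx0]
    · rw [div_self hx0]; simp
  · have hpair : pr q (fun ω => (S ω, X₁ ω)) (s, x) = 0 := by
      unfold pr
      apply Finset.sum_eq_zero
      intro ω _
      by_cases h : (S ω, X₁ ω) = (s, x)
      · have : S ω ≠ c := by
          rw [(Prod.mk.injEq _ _ _ _).mp h |>.1]; exact hs
        simp [h, hq0' ω this]
      · simp [h]
    rw [hpair]; simp

lemma cmi_eq_zero_of_function {Ω σ α β : Type*} [Fintype Ω] [Fintype σ]
    [Fintype α] [Fintype β] [DecidableEq σ] [DecidableEq α] [DecidableEq β]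
    (p : Ω → ℝ) (hp0 : ∀ ω, 0 ≤ p ω)
    (S : Ω → σ) (X₁ : Ω → α) (X₂ : Ω → β)
    (f : β → σ) (hf : ∀ ω, S ω = f (X₂ ω)) :
    cmi p S X₁ X₂ = 0 := by
  unfold cmi
  apply Finset.sum_eq_zero
  intro z _
  by_cases hz : pr p X₂ z = 0
  · simp [hz]
  · have hznn : 0 ≤ pr p X₂ z := by
      unfold pr
      exact Finset.sum_nonneg fun ω _ => by
        split <;> [exact hp0 ω; exact le_refl 0]
    have hzpos : 0 < pr p X₂ z := lt_of_le_of_ne hznn (Ne.symm hz)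
    have h := mi_const_fst (condDist p X₂ z) (fun ω => by
        unfold condDist
        split
        · exact div_nonneg (hp0 ω) hzpos.le
        · exact le_refl 0)
      (by
        unfold condDist
        rw [show (∑ ω, if X₂ ω = z then p ω / pr p X₂ z else 0)
            = (∑ ω, if X₂ ω = z then p ω else 0) / pr p X₂ z by
          rw [Finset.sum_div]
          exact Finset.sum_congr rfl fun ω _ => by split <;> simp]
        exact div_self hz)
      S X₁ (f z) (fun ω hω => by
        unfold condDist at hω
        by_cases hX : X₂ ω = z
        · rw [hf ω, hX]
        · simp [hX] at hω)
    rw [h, mul_zero]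

/-- If `SI` is a measure of shared information whose induced synergy
`CI = I(S:X₁|X₂) − I(S:X₁) + SI` is nonnegative, and `SI ≤ I(S:X₁)`, then
whenever `S` is a deterministic function of `X₂`, `SI = I(S:X₁)`. -/
theorem SI_eq_mi_of_function {Ω σ α β : Type*} [Fintype Ω] [Fintype σ]
    [Fintype α] [Fintype β] [DecidableEq σ] [DecidableEq α] [DecidableEq β]
    (p : Ω → ℝ) (hp0 : ∀ ω, 0 ≤ p ω) (hp1 : ∑ ω, p ω = 1)
    (S : Ω → σ) (X₁ : Ω → α) (X₂ : Ω → β)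
    (SI CI : ℝ)
    (hCIdef : CI = cmi p S X₁ X₂ - mi p S X₁ + SI)
    (hCI : 0 ≤ CI)
    (hSIle : SI ≤ mi p S X₁)
    (hfun : ∃ f : β → σ, ∀ ω, S ω = f (X₂ ω)) :
    SI = mi p S X₁ := by
  obtain ⟨f, hf⟩ := hfun
  have h0 := cmi_eq_zero_of_function p hp0 S X₁ X₂ f hf
  rw [h0] at hCIdef
  linarith [hCIdef ▸ hCI]
end

section
/- For the joint distribution p(s,x₁,x₂) with binary variables given by p(0,0,0)=2/6, p(0,1,0)=1/6, p(1,0,1)=1/6, p(1,1,1)=2/6 (so S = X₂ and I(S:X₁|X₂)=0), the measure SI_KL(S:X₁;X₂) := Σ_{x₁,x₂} p(x₁,x₂) D(p_{x₁∧x₂} ‖ p(S)) satisfies SI_KL(S:X₁;X₂) < I(S:X₁), where p_{x₁∧x₂} is the KL-minimizing point in the convex hull of p(S|x₁) and p(S|x₂). Hence SI_KL violates the identity SI(S:X₁;X₂)=I(S:X₁) required when S is a function of X₂. -/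
open scoped Classical
open Finset

/-- Kullback–Leibler divergence (base 2) between distributions on a finite set. -/
noncomputable def KL {S : Type*} [Fintype S] (q p : S → ℝ) : ℝ :=
  ∑ s, q s * Real.logb 2 (q s / p s)

/-- For the distribution `p(0,0,0)=2/6, p(0,1,0)=1/6, p(1,0,1)=1/6, p(1,1,1)=2/6`
on `(s,x₁,x₂)` with `S = X₂`, the measure
`SI_KL(S:X₁;X₂) = Σ p(x₁,x₂) D(p_{x₁∧x₂}‖p(S))` is strictly smaller than
`I(S:X₁)`, where `p_{x₁∧x₂}` minimizes `D(·‖p(S))` over `conv{p(S|x₁),p(S|x₂)}`.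
Hence `SI_KL` violates `SI(S:X₁;X₂) = I(S:X₁)` when `S` is a function of `X₂`. -/
theorem SIKL_violates_identity_when_S_function_of_X₂
    (p : Bool × Bool → ℝ)
    (hp : p (false, false) = 2/6 ∧ p (true, false) = 1/6 ∧
          p (false, true) = 1/6 ∧ p (true, true) = 2/6)
    (X₁ X₂ S : Bool × Bool → Bool)
    (hX₁ : ∀ ω, X₁ ω = ω.1) (hX₂ : ∀ ω, X₂ ω = ω.2) (hS : ∀ ω, S ω = ω.2)
    (prior : Bool → ℝ) (hprior : ∀ s, prior s = pr p S s)
    (post₁ post₂ : Bool → Bool → ℝ)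
    (hpost₁ : ∀ x₁ s, post₁ x₁ s = pr p (fun ω => (S ω, X₁ ω)) (s, x₁) / pr p X₁ x₁)
    (hpost₂ : ∀ x₂ s, post₂ x₂ s = pr p (fun ω => (S ω, X₂ ω)) (s, x₂) / pr p X₂ x₂)
    (pand : Bool → Bool → (Bool → ℝ))
    (hpand : ∀ x₁ x₂, pand x₁ x₂ ∈ convexHull ℝ {post₁ x₁, post₂ x₂} ∧
      ∀ r ∈ convexHull ℝ ({post₁ x₁, post₂ x₂} : Set (Bool → ℝ)),
        KL (pand x₁ x₂) prior ≤ KL r prior) :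
    (∑ x₁, ∑ x₂, pr p (fun ω => (X₁ ω, X₂ ω)) (x₁, x₂) * KL (pand x₁ x₂) prior)
      < mi p S X₁ := by

  obtain ⟨hp1, hp2, hp3, hp4⟩ := hp
  -- marginal of S (= X₂): uniform
  have hprF : prior false = 1/2 := by
    rw [hprior]; simp only [pr, hS, Fintype.sum_prod_type, Fintype.sum_bool]
    norm_num [hp1, hp2, hp3, hp4]
  have hprT : prior true = 1/2 := by
    rw [hprior]; simp only [pr, hS, Fintype.sum_prod_type, Fintype.sum_bool]
    norm_num [hp1, hp2, hp3, hp4]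
  -- marginals of X₁, X₂
  have hX1F : pr p X₁ false = 1/2 := by
    simp only [pr, hX₁, Fintype.sum_prod_type, Fintype.sum_bool]
    norm_num [hp1, hp2, hp3, hp4]
  have hX1T : pr p X₁ true = 1/2 := by
    simp only [pr, hX₁, Fintype.sum_prod_type, Fintype.sum_bool]
    norm_num [hp1, hp2, hp3, hp4]
  have hX2F : pr p X₂ false = 1/2 := by
    simp only [pr, hX₂, Fintype.sum_prod_type, Fintype.sum_bool]
    norm_num [hp1, hp2, hp3, hp4]
  have hX2T : pr p X₂ true = 1/2 := by
    simp only [pr, hX₂, Fintype.sum_prod_type, Fintype.sum_bool]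
    norm_num [hp1, hp2, hp3, hp4]
  -- joint of (S, X₁)
  have hJ : ∀ s x₁ : Bool, pr p (fun ω => (S ω, X₁ ω)) (s, x₁)
      = p (x₁, s) := by
    intro s x₁
    simp only [pr, hS, hX₁, Fintype.sum_prod_type, Fintype.sum_bool, Prod.mk.injEq]
    cases s <;> cases x₁ <;> norm_num
  -- joint of (S, X₂)
  have hJ2 : ∀ s x₂ : Bool, pr p (fun ω => (S ω, X₂ ω)) (s, x₂)
      = if s = x₂ then 1/2 else 0 := by
    intro s x₂
    simp only [pr, hS, hX₂, Fintype.sum_prod_type, Fintype.sum_bool, Prod.mk.injEq]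
    cases s <;> cases x₂ <;> norm_num [hp1, hp2, hp3, hp4]
  -- posterior values
  have h1FF : post₁ false false = 2/3 := by rw [hpost₁, hJ, hX1F, hp1]; norm_num
  have h1FT : post₁ false true = 1/3 := by rw [hpost₁, hJ, hX1F, hp3]; norm_num
  have h1TF : post₁ true false = 1/3 := by rw [hpost₁, hJ, hX1T, hp2]; norm_num
  have h1TT : post₁ true true = 2/3 := by rw [hpost₁, hJ, hX1T, hp4]; norm_num
  have h2FF : post₂ false false = 1 := by rw [hpost₂, hJ2, hX2F]; norm_num
  have h2FT : post₂ false true = 0 := by rw [hpost₂, hJ2, hX2F]; norm_num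
  have h2TF : post₂ true false = 0 := by rw [hpost₂, hJ2, hX2T]; norm_num
  have h2TT : post₂ true true = 1 := by rw [hpost₂, hJ2, hX2T]; norm_num
  -- KL(prior ‖ prior) = 0
  have hKL0 : KL prior prior = 0 := by
    simp [KL, Fintype.sum_bool, hprF, hprT]
  -- the constant c
  set c : ℝ := 2/3 * Real.logb 2 (4/3) + 1/3 * Real.logb 2 (2/3) with hc
  have hSF : pr p S false = 1/2 := by rw [← hprior]; exact hprF
  have hST : pr p S true = 1/2 := by rw [← hprior]; exact hprT
  have d1 : (1:ℝ)/3/(1/2) = 2/3 := by norm_num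
  have d2 : (2:ℝ)/3/(1/2) = 4/3 := by norm_num
  have hcval : KL (post₁ false) prior = c := by
    simp only [KL, Fintype.sum_bool, h1FF, h1FT, hprF, hprT, d1, d2, hc]; ring
  have hcval' : KL (post₁ true) prior = c := by
    simp only [KL, Fintype.sum_bool, h1TF, h1TT, hprF, hprT, d1, d2, hc]; try ring
  have hcpos : 0 < c := by
    have h32 : Real.log (32/27) = 2 * Real.log (4/3) + Real.log (2/3) := by
      rw [show (32:ℝ)/27 = (4/3) * (4/3) * (2/3) by norm_num,
        Real.log_mul (by norm_num) (by norm_num),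
        Real.log_mul (by norm_num) (by norm_num)]
      ring
    have hlb : c = Real.logb 2 (32/27) / 3 := by
      simp only [hc, Real.logb, h32]; ring
    rw [hlb]
    have := Real.logb_pos (by norm_num : (1:ℝ) < 2) (by norm_num : (32:ℝ)/27 > 1)
    linarith
  clear_value c
  -- mutual information value
  have d3 : (2:ℝ)/6/(1/2*(1/2)) = 4/3 := by norm_num
  have d4 : (1:ℝ)/6/(1/2*(1/2)) = 2/3 := by norm_num
  have hmi : mi p S X₁ = c := by
    simp only [mi, Fintype.sum_bool, hJ, hp1, hp2, hp3, hp4, hX1F, hX1T, hSF, hST,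
      d3, d4, hc]
    ring
  -- diagonal bounds: KL(pand x x) ≤ c
  have hdFF : KL (pand false false) prior ≤ c := by
    rw [← hcval]
    exact (hpand false false).2 (post₁ false)
      (subset_convexHull ℝ _ (Set.mem_insert _ _))
  have hdTT : KL (pand true true) prior ≤ c := by
    rw [← hcval']
    exact (hpand true true).2 (post₁ true)
      (subset_convexHull ℝ _ (Set.mem_insert _ _))
  -- off-diagonal: prior in the hull, so KL(pand) ≤ 0
  have hoFT : KL (pand false true) prior ≤ 0 := by
    rw [← hKL0]
    refine (hpand false true).2 prior ?_
    rw [convexHull_pair]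
    refine ⟨3/4, 1/4, by norm_num, by norm_num, by norm_num, ?_⟩
    funext s
    simp only [Pi.add_apply, Pi.smul_apply, smul_eq_mul]
    cases s
    · rw [h1FF, h2TF, hprF]; norm_num
    · rw [h1FT, h2TT, hprT]; norm_num
  have hoTF : KL (pand true false) prior ≤ 0 := by
    rw [← hKL0]
    refine (hpand true false).2 prior ?_
    rw [convexHull_pair]
    refine ⟨3/4, 1/4, by norm_num, by norm_num, by norm_num, ?_⟩
    funext s
    simp only [Pi.add_apply, Pi.smul_apply, smul_eq_mul]
    cases s
    · rw [h1TF, h2FF, hprF]; norm_num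
    · rw [h1TT, h2FT, hprT]; norm_num
  -- weights
  have hW : ∀ x₁ x₂ : Bool, pr p (fun ω => (X₁ ω, X₂ ω)) (x₁, x₂) = p (x₁, x₂) := by
    intro x₁ x₂
    simp only [pr, hX₁, hX₂, Fintype.sum_prod_type, Fintype.sum_bool, Prod.mk.injEq]
    cases x₁ <;> cases x₂ <;> norm_num
  rw [hmi]
  simp only [Fintype.sum_bool, hW]
  rw [hp1, hp2, hp3, hp4]
  linarith [hdFF, hdTT, hoFT, hoTF, hcpos]
end
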